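/- For k ≠ 0 and ε = ±1, every function y(z) satisfying k²(y − l)² − k z² = ε (implicitly, with y' obtained by implicit differentiation on an interval where the relation defines y smoothly with k(y−l) ≠ 0) is a solution of the ODE z³ y'' = ε (y')³. -/

import Mathlib

/-- for `k ≠ 0` and `ε = ±1`, any smooth function `y(z)` implicitly
defined on an open set by `k²(y - l)² - k z² = ε`, with `k (y - l) ≠ 0`, solves the
ODE `z³ y'' = ε (y')³`. -/
theorem statement9 (k l ε : ℝ) (hk : k ≠ 0) (hε : ε = 1 ∨ ε = -1)
    (s : Set ℝ) (hs : IsOpen s) (y : ℝ → ℝ) (hy : ContDiffOn ℝ 2 y s)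
    (himp : ∀ z ∈ s, k ^ 2 * (y z - l) ^ 2 - k * z ^ 2 = ε)
    (hreg : ∀ z ∈ s, k * (y z - l) ≠ 0) :
    ∀ z ∈ s, z ^ 3 * deriv (deriv y) z = ε * (deriv y z) ^ 3 := by
  have hdy : ∀ w ∈ s, DifferentiableAt ℝ y w := fun w hw =>
    (hy.contDiffAt (hs.mem_nhds hw)).differentiableAt (by norm_num)
  -- first derivative formula
  have key : ∀ w ∈ s, deriv y w = w * (k * (y w - l))⁻¹ := by
    intro w hw
    have hy' : HasDerivAt y (deriv y w) w := (hdy w hw).hasDerivAt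
    have hg : HasDerivAt (fun w => k ^ 2 * (y w - l) ^ 2 - k * w ^ 2)
        (k ^ 2 * (2 * (y w - l) ^ 1 * deriv y w) - k * (2 * w ^ 1)) w :=
      (((hy'.sub_const l).pow 2).const_mul (k ^ 2)).sub
        ((hasDerivAt_pow 2 w).const_mul k)
    have hconst : deriv (fun w => k ^ 2 * (y w - l) ^ 2 - k * w ^ 2) w = 0 := by
      have heq : (fun w => k ^ 2 * (y w - l) ^ 2 - k * w ^ 2) =ᶠ[nhds w]
          (fun _ => ε) := by
        filter_upwards [hs.mem_nhds hw] with x hx using himp x hx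
      rw [heq.deriv_eq, deriv_const]
    have h0 : k ^ 2 * (2 * (y w - l) ^ 1 * deriv y w) - k * (2 * w ^ 1) = 0 := by
      rw [← hg.deriv, hconst]
    have hA := hreg w hw
    field_simp at h0 ⊢
    have h1 : 2 * k * (k * (y w - l) * deriv y w - w) = 0 := by linear_combination h0
    have h2k : (2 : ℝ) * k ≠ 0 := by positivity
    have h3 := (mul_eq_zero.mp h1).resolve_left h2k
    have hne : y w - l ≠ 0 := right_ne_zero_of_mul hA
    rw [eq_div_iff hne]
    linear_combination h3
  intro z hz
  have hz' : HasDerivAt y (deriv y z) z := (hdy z hz).hasDerivAt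
  have hA : k * (y z - l) ≠ 0 := hreg z hz
  -- second derivative
  have hform : HasDerivAt (fun w => w * (k * (y w - l))⁻¹)
      (1 * (k * (y z - l))⁻¹ +
        z * (-(k * deriv y z) / (k * (y z - l)) ^ 2)) z :=
    (hasDerivAt_id z).mul (((hz'.sub_const l).const_mul k).inv hA)
  have h2 : deriv (deriv y) z =
      1 * (k * (y z - l))⁻¹ + z * (-(k * deriv y z) / (k * (y z - l)) ^ 2) := by
    have heq : deriv y =ᶠ[nhds z] (fun w => w * (k * (y w - l))⁻¹) := by
      filter_upwards [hs.mem_nhds hz] with x hx using key x hx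
    rw [heq.deriv_eq, hform.deriv]
  rw [h2, key z hz]
  have he : k ^ 2 * (y z - l) ^ 2 - k * z ^ 2 = ε := himp z hz
  have hne : y z - l ≠ 0 := right_ne_zero_of_mul hA
  field_simp
  rw [← he]
  ring
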